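/- Every protocol is truncatable: for every protocol there exists a number K such that for every stable consensus configuration C and every state q such that at least K agents of C are in state q, the configuration obtained from C by adding one fresh agent in state q is again a stable consensus. -/

import Mathlib

open scoped Classical

/-- A configuration: finitely many agents (identified by natural numbers) with states in `Q`,
and finitely many packets (identified by natural numbers) carrying messages in `M`.
`agentState a = none` means `a` is not an agent of the configuration, and similarly
`packetMsg p = none` means `p` is not a packet of the configuration. -/
structure Config (Q : Type) (M : Type) where
  agentState : ℕ → Option Q
  packetMsg : ℕ → Option M
  finAgents : {a : ℕ | agentState a ≠ none}.Finite
  finPackets : {p : ℕ | packetMsg p ≠ none}.Finite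

namespace Config

variable {Q M : Type}

/-- The set `Dom(C_A)` of agents of a configuration. -/
def agentsDom (C : Config Q M) : Set ℕ := {a | C.agentState a ≠ none}

/-- The set `Dom(C_P)` of packets of a configuration. -/
def packetsDom (C : Config Q M) : Set ℕ := {p | C.packetMsg p ≠ none}

/-- Update (add, change or remove) the state of agent `a`. -/
def setAgent (C : Config Q M) (a : ℕ) (s : Option Q) : Config Q M where
  agentState := Function.update C.agentState a s
  packetMsg := C.packetMsg
  finAgents := by
    apply Set.Finite.subset (C.finAgents.union (Set.finite_singleton a))
    intro x hx
    rcases eq_or_ne x a with h | h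
    · exact Or.inr h
    · exact Or.inl (by simpa [Function.update, h] using hx)
  finPackets := C.finPackets

/-- Update (add, change or remove) the content of packet `p`. -/
def setPacket (C : Config Q M) (p : ℕ) (m : Option M) : Config Q M where
  agentState := C.agentState
  packetMsg := Function.update C.packetMsg p m
  finAgents := C.finAgents
  finPackets := by
    apply Set.Finite.subset (C.finPackets.union (Set.finite_singleton p))
    intro x hx
    rcases eq_or_ne x p with h | h
    · exact Or.inr h
    · exact Or.inl (by simpa [Function.update, h] using hx)

/-- Rename agents and packets by permutations of `ℕ`:
the agent `a` of the result is in the state of agent `πA a` of `C`. -/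
def rename (C : Config Q M) (πA πP : Equiv.Perm ℕ) : Config Q M where
  agentState := fun a => C.agentState (πA a)
  packetMsg := fun p => C.packetMsg (πP p)
  finAgents := by
    have h : {a : ℕ | C.agentState (πA a) ≠ none} = πA ⁻¹' C.agentsDom := rfl
    rw [h]
    exact C.finAgents.preimage πA.injective.injOn
  finPackets := by
    have h : {p : ℕ | C.packetMsg (πP p) ≠ none} = πP ⁻¹' C.packetsDom := rfl
    rw [h]
    exact C.finPackets.preimage πP.injective.injOn

/-- The number of agents of `C` in state `q`. -/
noncomputable def numInState (C : Config Q M) (q : Q) : ℕ :=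
  {a | C.agentState a = some q}.ncard

/-- The number of packets of `C` carrying message `m` (the supply of `m` in `C`). -/
noncomputable def supply (C : Config Q M) (m : M) : ℕ :=
  {p | C.packetMsg p = some m}.ncard

end Config

/-- The type of step relations: `Step C A C'` states that there is a step
from `C` to `C'` whose set of active agents is `A`. -/
abbrev StepRel (Q M : Type) := Config Q M → Set ℕ → Config Q M → Prop

/-- The conditions that the step relation of a protocol must satisfy:
agent conservation, agent and packet anonymity, possibility to ignore extra packets,
and possibility to add passive agents. -/
structure IsProtocolStep {Q M : Type} (Step : StepRel Q M) : Prop where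
  active_subset : ∀ {C A C'}, Step C A C' → A ⊆ C.agentsDom
  agent_conservation : ∀ {C A C'}, Step C A C' → C.agentsDom = C'.agentsDom
  anonymity : ∀ (πA πP : Equiv.Perm ℕ) {C A C'}, Step C A C' →
    Step (C.rename πA πP) (πA ⁻¹' A) (C'.rename πA πP)
  ignore_packets : ∀ {C A C'} (p : ℕ) (m : M), Step C A C' →
    C.packetMsg p = none → C'.packetMsg p = none →
    Step (C.setPacket p (some m)) A (C'.setPacket p (some m))
  add_passive : ∀ {C A C'} (a : ℕ) (q : Q), Step C A C' →
    C.agentState a = none → C'.agentState a = none →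
    ∃ q' : Q, Step (C.setAgent a (some q)) A (C'.setAgent a (some q'))

/-- `C → C'` : a step from `C` to `C'` with some set of active agents. -/
def stepTo {Q M : Type} (Step : StepRel Q M) (C C' : Config Q M) : Prop := ∃ A, Step C A C'

/-- Reachability via finitely many steps. -/
def Reaches {Q M : Type} (Step : StepRel Q M) : Config Q M → Config Q M → Prop :=
  Relation.ReflTransGen (stepTo Step)

/-- An infinite execution: at each moment either nothing changes or a single step occurs. -/
def IsExecution {Q M : Type} (Step : StepRel Q M) (E : ℕ → Config Q M) : Prop :=
  ∀ i, E (i + 1) = E i ∨ stepTo Step (E i) (E (i + 1))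

/-- A finite execution of length `n`, given by the first `n + 1` values of `E`. -/
def IsFinExecution {Q M : Type} (Step : StepRel Q M) (n : ℕ) (E : ℕ → Config Q M) : Prop :=
  ∀ i < n, E (i + 1) = E i ∨ stepTo Step (E i) (E (i + 1))

/-- The default fairness condition: every configuration either becomes unreachable from
some moment on, or occurs infinitely many times in the execution. -/
def DefaultFair {Q M : Type} (Step : StepRel Q M) (E : ℕ → Config Q M) : Prop :=
  ∀ C : Config Q M,
    (∃ n, ∀ m, n ≤ m → ¬ Reaches Step (E m) C) ∨ (∀ n, ∃ m, n ≤ m ∧ E m = C)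

/-- A fairness condition is eventual if every finite execution can be continued
to an infinite execution satisfying it. -/
def Eventual {Q M : Type} (Step : StepRel Q M) (Φ : (ℕ → Config Q M) → Prop) : Prop :=
  ∀ (n : ℕ) (E : ℕ → Config Q M), IsFinExecution Step n E →
    ∃ E' : ℕ → Config Q M, (∀ i ≤ n, E' i = E i) ∧ IsExecution Step E' ∧ Φ E'

/-- A fairness condition ensures activity if whenever an execution satisfying it is
constant from some moment on, no step leads from the final configuration to a
different configuration. -/
def EnsuresActivity {Q M : Type} (Step : StepRel Q M) (Φ : (ℕ → Config Q M) → Prop) : Prop :=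
  ∀ E, IsExecution Step E → Φ E → ∀ n, (∀ m, n ≤ m → E m = E n) →
    ∀ C', stepTo Step (E n) C' → C' = E n

/-- A protocol: input mapping, individual output function, step relation
and fairness condition (the finite sets of states `Q`, messages `M` and input
letters `Sg` are type parameters). -/
structure Protocol (Q M Sg : Type) where
  Iin : Sg → Q
  out : Q → Bool
  Step : StepRel Q M
  fair : (ℕ → Config Q M) → Prop

/-- `C` is a consensus with output value `b`. -/
def IsConsensus {Q M : Type} (out : Q → Bool) (C : Config Q M) (b : Bool) : Prop :=
  ∀ a q, C.agentState a = some q → out q = b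

/-- `C` is a stable consensus with output value `b`. -/
def IsStableConsensus {Q M : Type} (Step : StepRel Q M) (out : Q → Bool)
    (C : Config Q M) (b : Bool) : Prop :=
  ∀ D, Reaches Step C D → IsConsensus out D b

/-- `C` is an input configuration for the input `x` : no packets, and for every state `q`
exactly as many agents in `q` as prescribed by `x` and the input mapping. -/
def IsInputConfig {Q M Sg : Type} [Fintype Sg] (Iin : Sg → Q) (x : Sg → ℕ)
    (C : Config Q M) : Prop :=
  (∀ p, C.packetMsg p = none) ∧
  ∀ q : Q, C.numInState q = ∑ σ : Sg, if Iin σ = q then x σ else 0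

/-- The protocol `P` implements the predicate `φ` : every fair execution from an input
configuration for `x` reaches a stable consensus with output value `φ x`. -/
def Implements {Q M Sg : Type} [Fintype Sg] (P : Protocol Q M Sg)
    (φ : (Sg → ℕ) → Bool) : Prop :=
  ∀ (x : Sg → ℕ) (C0 : Config Q M), IsInputConfig P.Iin x C0 →
    ∀ E : ℕ → Config Q M, IsExecution P.Step E → P.fair E → E 0 = C0 →
      ∃ n, IsStableConsensus P.Step P.out (E n) (φ x)

/-- The unreliable version of a step relation: every step `C --A--> C'` additionally
allows all degraded steps `C --A--> C''` satisfying population preservation,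
state preservation, message preservation, and reliance on active agents. -/
def UnrelStep {Q M : Type} (Step : StepRel Q M) : StepRel Q M := fun C A C'' =>
  Step C A C'' ∨ ∃ C', Step C A C' ∧
    C''.agentsDom = C'.agentsDom ∧
    C''.packetMsg = C'.packetMsg ∧
    (∀ a, C''.agentState a = C.agentState a ∨ C''.agentState a = C'.agentState a) ∧
    ((∀ a ∉ A, C''.agentState a = C.agentState a) ∨
      (∀ a ∈ A, C''.agentState a = C'.agentState a))

/-- The unreliable protocol corresponding to `P`. -/
def Unreliable {Q M Sg : Type} (P : Protocol Q M Sg) : Protocol Q M Sg :=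
  { P with Step := UnrelStep P.Step }

/-- A shadow extension of the execution `E` around the agent `a`, using the fresh
agent `a'` : a set of executions starting from `E 0` with the extra agent `a'` added in
the state of `a`, such that removing `a'` from any of them yields `E`, and at every
moment some execution of the set has `a` and `a'` in the same state. -/
def IsShadowExtension {Q M : Type} (Step : StepRel Q M) (E : ℕ → Config Q M)
    (a a' : ℕ) (Ext : Set (ℕ → Config Q M)) : Prop :=
  a ∈ (E 0).agentsDom ∧ a' ∉ (E 0).agentsDom ∧
  (∀ E' ∈ Ext, IsExecution Step E' ∧ (E' 0).agentState a' = (E 0).agentState a ∧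
    ∀ k, (E' k).setAgent a' none = E k) ∧
  ∀ k, ∃ E' ∈ Ext, (E' k).agentState a' = (E' k).agentState a

/-- A protocol is shadow-permitting if from every configuration there is a fair
execution having a shadow extension around every agent. -/
def ShadowPermitting {Q M Sg : Type} (P : Protocol Q M Sg) : Prop :=
  ∀ C : Config Q M, ∃ E, IsExecution P.Step E ∧ E 0 = C ∧ P.fair E ∧
    ∀ a ∈ C.agentsDom, ∃ a' ∉ C.agentsDom,
      ∃ Ext, IsShadowExtension P.Step E a a' Ext

/-- Truncatability with constant `K` : adding a fresh agent in a state already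
represented by at least `K` agents of a stable consensus yields a stable consensus. -/
def TruncatableWith {Q M : Type} (Step : StepRel Q M) (out : Q → Bool) (K : ℕ) : Prop :=
  ∀ (C : Config Q M) (b : Bool) (q : Q), IsStableConsensus Step out C b →
    K ≤ C.numInState q → ∀ a', C.agentState a' = none →
      IsStableConsensus Step out (C.setAgent a' (some q)) b

/-- The cube with lower bounds `l` and (possibly infinite) upper bounds `u`. -/
def cube {Sg : Type} (l : Sg → ℕ) (u : Sg → ℕ∞) : Set (Sg → ℕ) :=
  {x | ∀ σ, l σ ≤ x σ ∧ (x σ : ℕ∞) ≤ u σ}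

/-- A counting set is a finite union of cubes. -/
def IsCountingSet {Sg : Type} (S : Set (Sg → ℕ)) : Prop :=
  ∃ (n : ℕ) (l : Fin n → Sg → ℕ) (u : Fin n → Sg → ℕ∞), S = ⋃ j, cube (l j) (u j)

/-- A counting predicate is the membership predicate of a counting set. -/
def IsCountingPred {Sg : Type} (φ : (Sg → ℕ) → Bool) : Prop :=
  IsCountingSet {x | φ x = true}

section Truncation

open Config

variable {Q M : Type}

lemma Config.ext' {C D : Config Q M} (h1 : C.agentState = D.agentState)
    (h2 : C.packetMsg = D.packetMsg) : C = D := by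
  cases C; cases D; simp_all

lemma rename_agentState (C : Config Q M) (πA πP : Equiv.Perm ℕ) (a : ℕ) :
    (C.rename πA πP).agentState a = C.agentState (πA a) := rfl

lemma rename_packetMsg (C : Config Q M) (πA πP : Equiv.Perm ℕ) (p : ℕ) :
    (C.rename πA πP).packetMsg p = C.packetMsg (πP p) := rfl

lemma rename_one_one (C : Config Q M) : C.rename 1 1 = C := by
  apply Config.ext' <;> rfl

/-- Anonymity lifts to reachability. -/
lemma reaches_rename {Step : StepRel Q M} (hP : IsProtocolStep Step)
    (πA πP : Equiv.Perm ℕ) {C D : Config Q M} (h : Reaches Step C D) :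
    Reaches Step (C.rename πA πP) (D.rename πA πP) := by
  induction h with
  | refl => exact Relation.ReflTransGen.refl
  | tail _ hstep ih =>
    obtain ⟨A, hA⟩ := hstep
    exact ih.tail ⟨_, hP.anonymity πA πP hA⟩

lemma reaches_agentsDom {Step : StepRel Q M} (hP : IsProtocolStep Step)
    {C D : Config Q M} (h : Reaches Step C D) : C.agentsDom = D.agentsDom := by
  induction h with
  | refl => rfl
  | tail _ hstep ih =>
    obtain ⟨A, hA⟩ := hstep
    exact ih.trans (hP.agent_conservation hA)

/-- Adding a passive agent along a reachability sequence. -/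
lemma reaches_addAgent {Step : StepRel Q M} (hP : IsProtocolStep Step)
    {C D : Config Q M} (h : Reaches Step C D) (a : ℕ) (q : Q)
    (ha : C.agentState a = none) :
    ∃ q', Reaches Step (C.setAgent a (some q)) (D.setAgent a (some q')) := by
  induction h with
  | refl => exact ⟨q, Relation.ReflTransGen.refl⟩
  | @tail b c hreach hstep ih =>
    obtain ⟨q', hq'⟩ := ih
    obtain ⟨A, hA⟩ := hstep
    have hb : b.agentState a = none := by
      have : a ∉ C.agentsDom := by simp [Config.agentsDom, ha]
      rw [reaches_agentsDom hP hreach] at this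
      simpa [Config.agentsDom] using this
    have hc : c.agentState a = none := by
      have : a ∉ b.agentsDom := by simp [Config.agentsDom, hb]
      rw [hP.agent_conservation hA] at this
      simpa [Config.agentsDom] using this
    obtain ⟨q'', hq''⟩ := hP.add_passive a q' hA hb hc
    exact ⟨q'', hq'.tail ⟨A, hq''⟩⟩

/-- Adding an extra packet along a reachability sequence (up to renaming the target). -/
lemma reaches_addPacket {Step : StepRel Q M} (hP : IsProtocolStep Step)
    {C D : Config Q M} (h : Reaches Step C D) (p : ℕ) (m : M)
    (hp : C.packetMsg p = none) :
    ∃ D', Reaches Step (C.setPacket p (some m)) D' ∧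
      ∀ a, D'.agentState a = D.agentState a := by
  suffices h' : ∃ σ : Equiv.Perm ℕ, D.packetMsg (σ p) = none ∧
      Reaches Step (C.setPacket p (some m)) ((D.rename 1 σ).setPacket p (some m)) by
    obtain ⟨σ, _, hr⟩ := h'
    exact ⟨_, hr, fun a => rfl⟩
  induction h with
  | refl =>
    refine ⟨1, by simpa using hp, ?_⟩
    rw [rename_one_one]
    exact Relation.ReflTransGen.refl
  | @tail b c hreach hstep ih =>
    obtain ⟨σ, hσp, hr⟩ := ih
    obtain ⟨A, hA⟩ := hstep
    -- choose a fresh p''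
    have hfin : ({x | b.packetMsg (σ x) ≠ none} ∪ ({x | c.packetMsg (σ x) ≠ none} ∪ {p})).Finite := by
      refine Set.Finite.union ?_ (Set.Finite.union ?_ (Set.finite_singleton p))
      · exact (b.finPackets.preimage σ.injective.injOn)
      · exact (c.finPackets.preimage σ.injective.injOn)
    obtain ⟨p'', hp''⟩ := hfin.infinite_compl.nonempty
    simp only [Set.mem_compl_iff, Set.mem_union, Set.mem_singleton_iff, Set.mem_setOf_eq,
      not_or, not_not] at hp''
    obtain ⟨hbp'', hcp'', hpne⟩ := hp''
    set τ := Equiv.swap p p'' with hτ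
    set σ' := τ.trans σ with hσ'
    have hσ'p : σ' p = σ p'' := by simp [hσ', hτ]
    have hσ'p'' : σ' p'' = σ p := by simp [hσ', hτ]
    have hbeq : b.rename 1 σ' = b.rename 1 σ := by
      apply Config.ext'
      · rfl
      · funext x
        rcases eq_or_ne x p with rfl | hx1
        · show b.packetMsg (σ' x) = b.packetMsg (σ x)
          rw [hσ'p, hbp'', hσp]
        · rcases eq_or_ne x p'' with rfl | hx2
          · show b.packetMsg (σ' x) = b.packetMsg (σ x)
            rw [hσ'p'', hσp, hbp'']
          · show b.packetMsg (σ' x) = b.packetMsg (σ x)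
            rw [hσ', hτ]
            simp [Equiv.swap_apply_of_ne_of_ne hx1 hx2]
    have hstep' : Step (b.rename 1 σ') A (c.rename 1 σ') := by
      have := hP.anonymity 1 σ' hA
      simpa using this
    have hbfresh : (b.rename 1 σ').packetMsg p = none := by
      show b.packetMsg (σ' p) = none
      rw [hσ'p]; exact hbp''
    have hcfresh : (c.rename 1 σ').packetMsg p = none := by
      show c.packetMsg (σ' p) = none
      rw [hσ'p]; exact hcp''
    have hstep'' := hP.ignore_packets p m hstep' hbfresh hcfresh
    rw [hbeq] at hstep''
    refine ⟨σ', ?_, hr.tail ⟨A, hstep''⟩⟩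
    rw [hσ'p]; exact hcp''

end Truncation

section Truncation2

open Config

variable {Q M : Type}

/-- `C` can reach a configuration with an agent whose output differs from `b`. -/
def Bad {Q M : Type} (Step : StepRel Q M) (out : Q → Bool) (b : Bool) (C : Config Q M) : Prop :=
  ∃ D, Reaches Step C D ∧ ∃ a s, D.agentState a = some s ∧ out s ≠ b

lemma stable_iff_not_bad {Step : StepRel Q M} {out : Q → Bool} {C : Config Q M} {b : Bool} :
    IsStableConsensus Step out C b ↔ ¬ Bad Step out b C := by
  constructor
  · rintro h ⟨D, hD, a, s, has, hout⟩
    exact hout (h D hD a s has)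
  · intro h D hD a s has
    by_contra hout
    exact h ⟨D, hD, a, s, has, hout⟩

lemma bad_rename {Step : StepRel Q M} (hP : IsProtocolStep Step) {out : Q → Bool}
    {b : Bool} {C : Config Q M} (πA πP : Equiv.Perm ℕ) (h : Bad Step out b C) :
    Bad Step out b (C.rename πA πP) := by
  obtain ⟨D, hD, a, s, has, hout⟩ := h
  refine ⟨D.rename πA πP, reaches_rename hP πA πP hD, πA.symm a, s, ?_, hout⟩
  show D.agentState (πA (πA.symm a)) = some s
  simpa using has

lemma bad_addAgent {Step : StepRel Q M} (hP : IsProtocolStep Step) {out : Q → Bool}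
    {b : Bool} {C : Config Q M} {a : ℕ} (q : Q) (ha : C.agentState a = none)
    (h : Bad Step out b C) : Bad Step out b (C.setAgent a (some q)) := by
  obtain ⟨D, hD, a₀, s, has, hout⟩ := h
  obtain ⟨q', hq'⟩ := reaches_addAgent hP hD a q ha
  have hDa : D.agentState a = none := by
    have : a ∉ C.agentsDom := by simp [Config.agentsDom, ha]
    rw [reaches_agentsDom hP hD] at this
    simpa [Config.agentsDom] using this
  have hne : a₀ ≠ a := by rintro rfl; rw [hDa] at has; exact absurd has (by simp)
  refine ⟨D.setAgent a (some q'), hq', a₀, s, ?_, hout⟩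
  show Function.update D.agentState a (some q') a₀ = some s
  rw [Function.update_of_ne hne]; exact has

lemma bad_addPacket {Step : StepRel Q M} (hP : IsProtocolStep Step) {out : Q → Bool}
    {b : Bool} {C : Config Q M} {p : ℕ} (m : M) (hp : C.packetMsg p = none)
    (h : Bad Step out b C) : Bad Step out b (C.setPacket p (some m)) := by
  obtain ⟨D, hD, a₀, s, has, hout⟩ := h
  obtain ⟨D', hD', hag⟩ := reaches_addPacket hP hD p m hp
  exact ⟨D', hD', a₀, s, (hag a₀).trans has, hout⟩

/-- Matching permutation: two finitely-supported `Option`-valued functions with equal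
fiber counts are related by a permutation of `ℕ`. -/
lemma exists_matching_perm {L : Type} :
    ∀ (n : ℕ) (f g : ℕ → Option L), {a | f a ≠ none}.Finite → {a | g a ≠ none}.Finite →
    {a | g a ≠ none}.ncard ≤ n →
    (∀ q : L, {a | f a = some q}.ncard = {a | g a = some q}.ncard) →
    ∃ π : Equiv.Perm ℕ, ∀ a, f (π a) = g a := by
  intro n
  induction n with
  | zero =>
    intro f g hf hg hcard h
    have hgempty : {a | g a ≠ none} = ∅ := by
      rw [← Set.ncard_eq_zero hg]; omega
    have hgnone : ∀ a, g a = none := by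
      intro a; by_contra hne
      exact (Set.eq_empty_iff_forall_notMem.mp hgempty a) hne
    have hfnone : ∀ a, f a = none := by
      intro a
      cases hfa : f a with
      | none => rfl
      | some q =>
        have h1 : {x | g x = some q} = ∅ := by
          ext x; simp [hgnone x]
        have h2 : {x | f x = some q}.ncard = 0 := by rw [h q, h1]; simp
        have h3 : {x | f x = some q}.Finite := hf.subset (by intro x hx; simp_all)
        have : {x | f x = some q} = ∅ := by rwa [Set.ncard_eq_zero h3] at h2
        exact absurd (Set.eq_empty_iff_forall_notMem.mp this a) (by simp [hfa])
    exact ⟨1, fun a => by rw [hfnone, hgnone]⟩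
  | succ n ih =>
    intro f g hf hg hcard h
    by_cases hge : {a | g a ≠ none} = ∅
    · -- same as base case
      have hgnone : ∀ a, g a = none := by
        intro a; by_contra hne
        exact (Set.eq_empty_iff_forall_notMem.mp hge a) hne
      have hfnone : ∀ a, f a = none := by
        intro a
        cases hfa : f a with
        | none => rfl
        | some q =>
          have h1 : {x | g x = some q} = ∅ := by ext x; simp [hgnone x]
          have h2 : {x | f x = some q}.ncard = 0 := by rw [h q, h1]; simp
          have h3 : {x | f x = some q}.Finite := hf.subset (by intro x hx; simp_all)
          have : {x | f x = some q} = ∅ := by rwa [Set.ncard_eq_zero h3] at h2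
          exact absurd (Set.eq_empty_iff_forall_notMem.mp this a) (by simp [hfa])
      exact ⟨1, fun a => by rw [hfnone, hgnone]⟩
    · obtain ⟨a, ha⟩ := Set.nonempty_iff_ne_empty.mpr hge
      obtain ⟨q, hq⟩ := Option.ne_none_iff_exists'.mp ha
      -- the fiber of f over q is nonempty
      have hgfib : a ∈ {x | g x = some q} := hq
      have hgfin : {x | g x = some q}.Finite := hg.subset (by intro x hx; simp_all)
      have hffin : {x | f x = some q}.Finite := hf.subset (by intro x hx; simp_all)
      have hfpos : 0 < {x | f x = some q}.ncard := by
        rw [h q]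
        exact (Set.ncard_pos hgfin).mpr ⟨a, hgfib⟩
      obtain ⟨a', ha'⟩ := (Set.ncard_pos hffin).mp hfpos
      have hfa' : f a' = some q := ha'
      set f' := Function.update f a' none with hf'def
      set g' := Function.update g a none with hg'def
      have hf'sub : {x | f' x ≠ none} ⊆ {x | f x ≠ none} := by
        intro x hx
        rcases eq_or_ne x a' with rfl | hne
        · simp [hf'def] at hx
        · simpa [hf'def, Function.update_of_ne hne] using hx
      have hg'set : {x | g' x ≠ none} = {x | g x ≠ none} \ {a} := by
        ext x
        rcases eq_or_ne x a with rfl | hne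
        · simp [hg'def]
        · simp [hg'def, Function.update_of_ne hne, hne]
      have hg'card : {x | g' x ≠ none}.ncard ≤ n := by
        rw [hg'set]
        have := Set.ncard_diff_singleton_add_one (s := {x | g x ≠ none}) (a := a) (by simp [hq]) hg
        omega
      have hfibers : ∀ r : L, {x | f' x = some r}.ncard = {x | g' x = some r}.ncard := by
        intro r
        have hfset : {x | f' x = some r} = {x | f x = some r} \ {a'} := by
          ext x
          rcases eq_or_ne x a' with rfl | hne
          · simp [hf'def]
          · simp [hf'def, Function.update_of_ne hne, hne]
        have hgset : {x | g' x = some r} = {x | g x = some r} \ {a} := by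
          ext x
          rcases eq_or_ne x a with rfl | hne
          · simp [hg'def]
          · simp [hg'def, Function.update_of_ne hne, hne]
        rw [hfset, hgset]
        rcases eq_or_ne r q with rfl | hne
        · have h1 := Set.ncard_diff_singleton_add_one (s := {x | f x = some r}) ha' hffin
          have h2 := Set.ncard_diff_singleton_add_one (s := {x | g x = some r}) hgfib hgfin
          have := h r
          omega
        · have h1 : {x | f x = some r} \ {a'} = {x | f x = some r} := by
            apply Set.diff_singleton_eq_self
            simp only [Set.mem_setOf_eq, hfa']
            exact fun hc => hne (Option.some.inj hc).symm
          have h2 : {x | g x = some r} \ {a} = {x | g x = some r} := by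
            apply Set.diff_singleton_eq_self
            simp only [Set.mem_setOf_eq, hq]
            exact fun hc => hne (Option.some.inj hc).symm
          rw [h1, h2]; exact h r
      obtain ⟨π', hπ'⟩ := ih f' g' (hf.subset hf'sub)
        (hg.subset (by rw [hg'set]; exact Set.diff_subset)) hg'card hfibers
      refine ⟨π'.trans (Equiv.swap (π' a) a'), ?_⟩
      intro x
      show f (Equiv.swap (π' a) a' (π' x)) = g x
      rcases eq_or_ne x a with rfl | hxa
      · rw [Equiv.swap_apply_left, hfa', hq]
      · have hπne : π' x ≠ π' a := fun hc => hxa (π'.injective hc)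
        rcases eq_or_ne (π' x) a' with heq | hne2
        · rw [heq, Equiv.swap_apply_right]
          have h1 : f' (π' x) = g' x := hπ' x
          rw [heq] at h1
          simp only [hf'def, Function.update_self] at h1
          have hgx : g x = none := by
            rw [hg'def, Function.update_of_ne hxa] at h1; exact h1.symm
          have h2 : f' (π' a) = g' a := hπ' a
          have hπane : π' a ≠ a' := fun hc => hπne (heq.trans hc.symm)
          rw [hf'def, Function.update_of_ne hπane, hg'def, Function.update_self] at h2
          rw [h2, hgx]
        · rw [Equiv.swap_apply_of_ne_of_ne hπne hne2]
          have h1 : f' (π' x) = g' x := hπ' x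
          rw [hf'def, Function.update_of_ne hne2, hg'def, Function.update_of_ne hxa] at h1
          exact h1

end Truncation2


open Config

variable {Q M : Type}

lemma numInState_setAgent (C : Config Q M) (a : ℕ) (q : Q) (ha : C.agentState a = none)
    (r : Q) : (C.setAgent a (some q)).numInState r =
      C.numInState r + if r = q then 1 else 0 := by
  unfold Config.numInState
  by_cases hrq : r = q
  · subst hrq
    have hset : {x | (C.setAgent a (some r)).agentState x = some r} =
        insert a {x | C.agentState x = some r} := by
      ext x
      rcases eq_or_ne x a with rfl | hne
      · simp [Config.setAgent]
      · simp [Config.setAgent, Function.update_of_ne hne, hne]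
    rw [hset, Set.ncard_insert_of_notMem (by simp [ha])
      (C.finAgents.subset (by intro x hx; simp_all))]
    simp
  · have hset : {x | (C.setAgent a (some q)).agentState x = some r} =
        {x | C.agentState x = some r} := by
      ext x
      rcases eq_or_ne x a with rfl | hxa
      · have hqr : ¬ q = r := fun h => hrq h.symm
        simp [Config.setAgent, ha, hqr]
      · simp [Config.setAgent, Function.update_of_ne hxa]
    rw [hset]
    simp [hrq]

lemma supply_setAgent (C : Config Q M) (a : ℕ) (s : Option Q) (m : M) :
    (C.setAgent a s).supply m = C.supply m := rfl

lemma numInState_setPacket (C : Config Q M) (p : ℕ) (s : Option M) (q : Q) :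
    (C.setPacket p s).numInState q = C.numInState q := rfl

lemma supply_setPacket (C : Config Q M) (p : ℕ) (m : M) (hp : C.packetMsg p = none)
    (m' : M) : (C.setPacket p (some m)).supply m' =
      C.supply m' + if m' = m then 1 else 0 := by
  unfold Config.supply
  by_cases hrq : m' = m
  · subst hrq
    have hset : {x | (C.setPacket p (some m')).packetMsg x = some m'} =
        insert p {x | C.packetMsg x = some m'} := by
      ext x
      rcases eq_or_ne x p with rfl | hne
      · simp [Config.setPacket]
      · simp [Config.setPacket, Function.update_of_ne hne, hne]
    rw [hset, Set.ncard_insert_of_notMem (by simp [hp])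
      (C.finPackets.subset (by intro x hx; simp_all))]
    simp
  · have hset : {x | (C.setPacket p (some m)).packetMsg x = some m'} =
        {x | C.packetMsg x = some m'} := by
      ext x
      rcases eq_or_ne x p with rfl | hxp
      · have hqr : ¬ m = m' := fun h => hrq h.symm
        simp [Config.setPacket, hp, hqr]
      · simp [Config.setPacket, Function.update_of_ne hxp]
    rw [hset]
    simp [hrq]

lemma numInState_rename (C : Config Q M) (πA πP : Equiv.Perm ℕ) (q : Q) :
    (C.rename πA πP).numInState q = C.numInState q := by
  unfold Config.numInState
  have hset : {a | (C.rename πA πP).agentState a = some q} =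
      ⇑πA.symm '' {a | C.agentState a = some q} := by
    ext x
    simp [Equiv.symm_apply_eq, eq_comm, Config.rename]
  rw [hset, Set.ncard_image_of_injective _ πA.symm.injective]

lemma supply_rename (C : Config Q M) (πA πP : Equiv.Perm ℕ) (m : M) :
    (C.rename πA πP).supply m = C.supply m := by
  unfold Config.supply
  have hset : {p | (C.rename πA πP).packetMsg p = some m} =
      ⇑πP.symm '' {p | C.packetMsg p = some m} := by
    ext x
    simp [Equiv.symm_apply_eq, eq_comm, Config.rename]
  rw [hset, Set.ncard_image_of_injective _ πP.symm.injective]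

lemma bad_of_counts_eq {Step : StepRel Q M} (hP : IsProtocolStep Step)
    {out : Q → Bool} {b : Bool} {C D : Config Q M}
    (hqeq : ∀ q, C.numInState q = D.numInState q)
    (hmeq : ∀ m, C.supply m = D.supply m)
    (hbad : Bad Step out b C) : Bad Step out b D := by
  obtain ⟨πA, hπA⟩ := exists_matching_perm {a | D.agentState a ≠ none}.ncard
    C.agentState D.agentState C.finAgents D.finAgents le_rfl hqeq
  obtain ⟨πP, hπP⟩ := exists_matching_perm {p | D.packetMsg p ≠ none}.ncard
    C.packetMsg D.packetMsg C.finPackets D.finPackets le_rfl hmeq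
  have hDeq : C.rename πA πP = D := by
    apply Config.ext'
    · funext a; exact hπA a
    · funext p; exact hπP p
  rw [← hDeq]
  exact bad_rename hP πA πP hbad

/-- `Bad` is monotone with respect to pointwise counts. -/
lemma bad_mono [Fintype Q] [Fintype M] {Step : StepRel Q M} (hP : IsProtocolStep Step)
    {out : Q → Bool} {b : Bool} :
    ∀ (N : ℕ) (C D : Config Q M),
    (∀ q, C.numInState q ≤ D.numInState q) → (∀ m, C.supply m ≤ D.supply m) →
    ((∑ q, D.numInState q) + ∑ m, D.supply m ≤ ((∑ q, C.numInState q) + ∑ m, C.supply m) + N) →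
    Bad Step out b C → Bad Step out b D := by
  intro N
  induction N with
  | zero =>
    intro C D hq hm hsum hbad
    have hqeq : ∀ q, C.numInState q = D.numInState q := by
      by_contra hne
      push_neg at hne
      obtain ⟨q, hqne⟩ := hne
      have h1 : ∑ q, C.numInState q < ∑ q, D.numInState q :=
        Finset.sum_lt_sum (fun i _ => hq i) ⟨q, Finset.mem_univ q, lt_of_le_of_ne (hq q) hqne⟩
      have h2 : ∑ m, C.supply m ≤ ∑ m, D.supply m := Finset.sum_le_sum (fun i _ => hm i)
      omega
    have hmeq : ∀ m, C.supply m = D.supply m := by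
      by_contra hne
      push_neg at hne
      obtain ⟨m, hmne⟩ := hne
      have h1 : ∑ m, C.supply m < ∑ m, D.supply m :=
        Finset.sum_lt_sum (fun i _ => hm i) ⟨m, Finset.mem_univ m, lt_of_le_of_ne (hm m) hmne⟩
      have h2 : ∑ q, C.numInState q ≤ ∑ q, D.numInState q := Finset.sum_le_sum (fun i _ => hq i)
      omega
    exact bad_of_counts_eq hP hqeq hmeq hbad
  | succ N ih =>
    intro C D hq hm hsum hbad
    by_cases hqeq : ∀ q, C.numInState q = D.numInState q
    · by_cases hmeq : ∀ m, C.supply m = D.supply m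
      · exact bad_of_counts_eq hP hqeq hmeq hbad
      · push_neg at hmeq
        obtain ⟨m, hmne⟩ := hmeq
        have hmlt : C.supply m < D.supply m := lt_of_le_of_ne (hm m) hmne
        obtain ⟨p, hpfresh⟩ := C.finPackets.infinite_compl.nonempty
        have hpnone : C.packetMsg p = none := by
          simpa [Set.mem_compl_iff] using hpfresh
        set C' := C.setPacket p (some m) with hC'
        have hbad' : Bad Step out b C' := bad_addPacket hP m hpnone hbad
        have hq' : ∀ r, C'.numInState r ≤ D.numInState r := by
          intro r; rw [hC', numInState_setPacket]; exact hq r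
        have hm' : ∀ m', C'.supply m' ≤ D.supply m' := by
          intro m'
          rw [hC', supply_setPacket C p m hpnone m']
          rcases eq_or_ne m' m with rfl | hne
          · simpa using hmlt
          · simpa [hne] using hm m'
        have hsum' : ((∑ q, D.numInState q) + ∑ m', D.supply m' ≤
            ((∑ q, C'.numInState q) + ∑ m', C'.supply m') + N) := by
          have h1 : ∑ r, C'.numInState r = ∑ r, C.numInState r :=
            Finset.sum_congr rfl (fun i _ => by rw [hC', numInState_setPacket])
          have h2 : ∑ m', C'.supply m' = (∑ m', C.supply m') + 1 := by
            rw [Finset.sum_congr rfl (fun i _ => supply_setPacket C p m hpnone i),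
              Finset.sum_add_distrib]
            simp
          omega
        exact ih C' D hq' hm' hsum' hbad'
    · push_neg at hqeq
      obtain ⟨q, hqne⟩ := hqeq
      have hqlt : C.numInState q < D.numInState q := lt_of_le_of_ne (hq q) hqne
      obtain ⟨a, hafresh⟩ := C.finAgents.infinite_compl.nonempty
      have hanone : C.agentState a = none := by
        simpa [Set.mem_compl_iff] using hafresh
      set C' := C.setAgent a (some q) with hC'
      have hbad' : Bad Step out b C' := bad_addAgent hP q hanone hbad
      have hq' : ∀ r, C'.numInState r ≤ D.numInState r := by
        intro r
        rw [hC', numInState_setAgent C a q hanone r]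
        rcases eq_or_ne r q with rfl | hne
        · simpa using hqlt
        · simpa [hne] using hq r
      have hm' : ∀ m', C'.supply m' ≤ D.supply m' := by
        intro m'; rw [hC', supply_setAgent]; exact hm m'
      have hsum' : ((∑ q, D.numInState q) + ∑ m', D.supply m' ≤
          ((∑ q, C'.numInState q) + ∑ m', C'.supply m') + N) := by
        have h1 : ∑ r, C'.numInState r = (∑ r, C.numInState r) + 1 := by
          rw [Finset.sum_congr rfl (fun i _ => numInState_setAgent C a q hanone i),
            Finset.sum_add_distrib]
          simp
        have h2 : ∑ m', C'.supply m' = ∑ m', C.supply m' :=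
          Finset.sum_congr rfl (fun i _ => by rw [hC', supply_setAgent])
        omega
      exact ih C' D hq' hm' hsum' hbad'



section Truncation4

lemma exists_monotone_subseq_nat (f : ℕ → ℕ) :
    ∃ g : ℕ → ℕ, StrictMono g ∧ Monotone (f ∘ g) := by
  have hwf : (Set.univ : Set ℕ).IsPWO := (Set.isWF_univ_iff.mpr inferInstance).isPWO
  obtain ⟨g, hg⟩ := hwf.exists_monotone_subseq (f := f) (fun n => Set.mem_univ _)
  exact ⟨g, g.strictMono, hg⟩

lemma exists_monotone_subseq_list (l : List (ℕ → ℕ)) :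
    ∃ g : ℕ → ℕ, StrictMono g ∧ ∀ f ∈ l, Monotone (f ∘ g) := by
  induction l with
  | nil => exact ⟨id, strictMono_id, by simp⟩
  | cons f l ih =>
    obtain ⟨g, hg, hl⟩ := ih
    obtain ⟨g', hg', hf⟩ := exists_monotone_subseq_nat (f ∘ g)
    refine ⟨g ∘ g', hg.comp hg', ?_⟩
    intro f' hf'
    rcases List.mem_cons.mp hf' with rfl | hmem
    · exact hf
    · exact (hl f' hmem).comp hg'.monotone

end Truncation4

/-- Every protocol is truncatable: there is a constant `K` such that adding a fresh agent
in a state already represented by at least `K` agents of a stable consensus again yields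
a stable consensus. -/
theorem every_protocol_truncatable {Q M Sg : Type} [Fintype Q] [Nonempty Q] [Fintype M]
    [Fintype Sg] [Nonempty Sg] (P : Protocol Q M Sg) (hP : IsProtocolStep P.Step) :
    ∃ K, TruncatableWith P.Step P.out K := by
  by_contra hK
  push_neg at hK
  have hex : ∀ K : ℕ, ∃ (C : Config Q M) (b : Bool) (q : Q),
      IsStableConsensus P.Step P.out C b ∧ K ≤ C.numInState q ∧
      ∃ a', C.agentState a' = none ∧
        ¬ IsStableConsensus P.Step P.out (C.setAgent a' (some q)) b := by
    intro K
    have h := hK K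
    unfold TruncatableWith at h
    push_neg at h
    exact h
  choose C b q hst hnum a' ha' hnst using hex
  -- pigeonhole: fix the state and the boolean
  obtain ⟨⟨q₀, b₀⟩, hinf⟩ := Finite.exists_infinite_fiber (fun K => (q K, b K))
  have hS : ((fun K => (q K, b K)) ⁻¹' {(q₀, b₀)}).Infinite := Set.infinite_coe_iff.mp hinf
  have hk : ∀ n : ℕ, ∃ m, (q m, b m) = (q₀, b₀) ∧ n < m := by
    intro n
    obtain ⟨m, hm1, hm2⟩ := hS.exists_gt n
    exact ⟨m, hm1, hm2⟩
  choose k hkfix hkgt using hk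
  have hq0 : ∀ n, q (k n) = q₀ := fun n => congrArg Prod.fst (hkfix n)
  have hb0 : ∀ n, b (k n) = b₀ := fun n => congrArg Prod.snd (hkfix n)
  -- simultaneous monotone subsequence over all coordinates
  set l : List (ℕ → ℕ) :=
    ((Finset.univ : Finset Q).toList.map (fun r => fun n => (C (k n)).numInState r)) ++
    ((Finset.univ : Finset M).toList.map (fun m => fun n => (C (k n)).supply m)) with hl
  obtain ⟨g, hg, hmono⟩ := exists_monotone_subseq_list l
  have hmonoQ : ∀ r : Q, ∀ {n₁ n₂ : ℕ}, n₁ ≤ n₂ →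
      (C (k (g n₁))).numInState r ≤ (C (k (g n₂))).numInState r := by
    intro r n₁ n₂ hle
    have hmem : (fun n => (C (k n)).numInState r) ∈ l := by
      rw [hl]
      exact List.mem_append_left _ (List.mem_map.mpr
        ⟨r, Finset.mem_toList.mpr (Finset.mem_univ r), rfl⟩)
    exact hmono _ hmem hle
  have hmonoM : ∀ m : M, ∀ {n₁ n₂ : ℕ}, n₁ ≤ n₂ →
      (C (k (g n₁))).supply m ≤ (C (k (g n₂))).supply m := by
    intro m n₁ n₂ hle
    have hmem : (fun n => (C (k n)).supply m) ∈ l := by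
      rw [hl]
      exact List.mem_append_right _ (List.mem_map.mpr
        ⟨m, Finset.mem_toList.mpr (Finset.mem_univ m), rfl⟩)
    exact hmono _ hmem hle
  -- the q₀ count grows without bound along the subsequence
  have hlow : ∀ n, n < (C (k (g n))).numInState q₀ := by
    intro n
    have h1 : k (g n) ≤ (C (k (g n))).numInState (q (k (g n))) := hnum (k (g n))
    rw [hq0] at h1
    have h2 : g n < k (g n) := hkgt (g n)
    have h3 : n ≤ g n := hg.le_apply
    omega
  set n₁ : ℕ := (C (k (g 0))).numInState q₀ + 1 with hn₁
  have hstrict : (C (k (g 0))).numInState q₀ < (C (k (g n₁))).numInState q₀ := by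
    have := hlow n₁
    omega
  -- badness at the small index
  have hbadi : Bad P.Step P.out b₀
      ((C (k (g 0))).setAgent (a' (k (g 0))) (some q₀)) := by
    have h := hnst (k (g 0))
    rw [hq0, hb0] at h
    rw [stable_iff_not_bad] at h
    exact not_not.mp h
  have hstablej : ¬ Bad P.Step P.out b₀ (C (k (g n₁))) := by
    have h := hst (k (g n₁))
    rw [hb0] at h
    exact stable_iff_not_bad.mp h
  -- transfer badness via monotonicity
  set C' := (C (k (g 0))).setAgent (a' (k (g 0))) (some q₀) with hC'
  have hqle : ∀ r, C'.numInState r ≤ (C (k (g n₁))).numInState r := by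
    intro r
    rw [hC', numInState_setAgent _ _ _ (ha' (k (g 0))) r]
    rcases eq_or_ne r q₀ with rfl | hne
    · simp only [if_pos rfl, if_true]
      have := hstrict
      omega
    · have := hmonoQ r (Nat.zero_le n₁)
      simp only [if_neg hne]
      omega
  have hmle : ∀ m, C'.supply m ≤ (C (k (g n₁))).supply m := by
    intro m
    rw [hC', supply_setAgent]
    exact hmonoM m (Nat.zero_le n₁)
  exact hstablej (bad_mono hP
    ((∑ r, (C (k (g n₁))).numInState r) + ∑ m, (C (k (g n₁))).supply m)
    C' (C (k (g n₁))) hqle hmle (by omega) hbadi)
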